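/- Let c ∈ ℂ, let r ≥ 1 be an integer, and let 0 < ρ < 1. Then (1/(2πi)) ∮_{|w|=ρ} (c + (1−c)w)^r / ( w^{r+3} (1−w)^r ) dw = ∑_{j=0}^{r} binom(r,j) (1−c)^j c^{r−j} binom(2r+1−j, r−1), where the integral is over the circle of radius ρ centered at 0, traversed once counterclockwise. -/

import Mathlib

open Finset
open scoped BigOperators Real

noncomputable section

open MeasureTheory Metric


-- helper: finite sum interchange for circle integrals
lemma circleIntegral_finset_sum {ι : Type*} (s : Finset ι) (f : ι → ℂ → ℂ) (c : ℂ) (R : ℝ)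
    (h : ∀ i ∈ s, CircleIntegrable (f i) c R) :
    (∮ z in C(c, R), ∑ i ∈ s, f i z) = ∑ i ∈ s, ∮ z in C(c, R), f i z := by
  unfold circleIntegral
  simp_rw [Finset.smul_sum]
  rw [intervalIntegral.integral_finset_sum (fun i hi => (h i hi).out)]

lemma circleIntegral_add' {f g : ℂ → ℂ} {c : ℂ} {R : ℝ} (hf : CircleIntegrable f c R)
    (hg : CircleIntegrable g c R) :
    (∮ z in C(c, R), (f z + g z)) = (∮ z in C(c, R), f z) + ∮ z in C(c, R), g z := by
  unfold circleIntegral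
  simp_rw [smul_add]
  rw [intervalIntegral.integral_add hf.out hg.out]

lemma coeffN (c : ℂ) (r : ℕ) (m : ℕ) :
    ((Polynomial.C c + Polynomial.C (1 - c) * Polynomial.X) ^ r).coeff m
      = (r.choose m : ℂ) * (1 - c) ^ m * c ^ (r - m) := by
  have hrw : (Polynomial.C c + Polynomial.C (1 - c) * Polynomial.X) ^ r
      = ∑ k ∈ range (r + 1),
          Polynomial.C ((1 - c) ^ k * c ^ (r - k) * (r.choose k : ℂ)) * Polynomial.X ^ k := by
    rw [add_comm, add_pow]
    refine Finset.sum_congr rfl fun k _ => ?_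
    rw [mul_pow, ← Polynomial.C_pow, ← Polynomial.C_pow, ← Polynomial.C_eq_natCast]
    simp only [Polynomial.C_mul]
    ring
  rw [hrw, Polynomial.finset_sum_coeff]
  simp only [Polynomial.coeff_C_mul, Polynomial.coeff_X_pow, mul_ite, mul_one, mul_zero]
  rw [Finset.sum_ite_eq (range (r + 1)) m]
  by_cases hm : m ∈ range (r + 1)
  · rw [if_pos hm]; ring
  · rw [if_neg hm]
    rw [Nat.choose_eq_zero_of_lt (by simpa using hm)]
    simp



/-- The residue computation for the contour integral `ν₂` in the proof of
formula (1.23) of the paper: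
`(1/(2πi)) ∮_{|w|=ρ} (c+(1−c)w)^r /(w^{r+3}(1−w)^r) dw
  = ∑_{j=0}^r C(r,j)(1−c)^j c^{r−j} C(2r+1−j, r−1)`. -/
theorem contour_integral_nu_two (c : ℂ) (r : ℕ) (hr : 1 ≤ r) (ρ : ℝ)
    (hρ0 : 0 < ρ) (hρ1 : ρ < 1) :
    (2 * Real.pi * Complex.I)⁻¹
        * (∮ w in C(0, ρ), (c + (1 - c) * w)^r / (w^(r + 3) * (1 - w)^r))
      = ∑ j ∈ Finset.range (r + 1),
          (r.choose j : ℂ) * (1 - c)^j * c^(r - j)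
            * ((2 * r + 1 - j).choose (r - 1) : ℂ) := by
  classical
  set N : Polynomial ℂ := (Polynomial.C c + Polynomial.C (1 - c) * Polynomial.X) ^ r with hN
  set inv : PowerSeries ℂ := (PowerSeries.invOneSubPow ℂ r).val with hinv
  set S : PowerSeries ℂ := (N : PowerSeries ℂ) * inv with hS
  set T : Polynomial ℂ := PowerSeries.trunc (r + 3) S with hT
  -- (1-X)^r * inv = 1
  have hunit : ((1 : PowerSeries ℂ) - PowerSeries.X) ^ r * inv = 1 := by
    rw [hinv, ← PowerSeries.invOneSubPow_inv_eq_one_sub_pow]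
    exact (PowerSeries.invOneSubPow ℂ r).inv_val
  -- key coefficient identity for the truncation
  have hkey : ∀ m < r + 3,
      (PowerSeries.coeff m) (((1 - Polynomial.X) ^ r * T : Polynomial ℂ) : PowerSeries ℂ)
        = (PowerSeries.coeff m) (N : PowerSeries ℂ) := by
    intro m hm
    have hcast : (((1 - Polynomial.X) ^ r * T : Polynomial ℂ) : PowerSeries ℂ)
        = (T : PowerSeries ℂ) * ((1 : PowerSeries ℂ) - PowerSeries.X) ^ r := by
      push_cast [Polynomial.coe_mul, Polynomial.coe_pow]
      rw [mul_comm]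
    rw [hcast]
    have h1 : (PowerSeries.coeff m) ((T : PowerSeries ℂ) * (1 - PowerSeries.X) ^ r)
        = (PowerSeries.trunc (r+3) ((T : PowerSeries ℂ) * (1 - PowerSeries.X) ^ r)).coeff m := by
      rw [PowerSeries.coeff_trunc, if_pos hm]
    rw [h1, hT, PowerSeries.trunc_trunc_mul]
    rw [PowerSeries.coeff_trunc, if_pos hm, hS, mul_assoc, mul_comm inv, hunit, mul_one]
  -- divisibility and the remainder polynomial
  have hdvd : (Polynomial.X : Polynomial ℂ) ^ (r + 3) ∣ (N - (1 - Polynomial.X) ^ r * T) := by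
    rw [Polynomial.X_pow_dvd_iff]
    intro d hd
    have := hkey d hd
    rw [Polynomial.coeff_coe, Polynomial.coeff_coe] at this
    simp [Polynomial.coeff_sub, this]
  obtain ⟨Q, hQ⟩ := hdvd
  -- pointwise identity
  have hpt : ∀ w : ℂ, (c + (1 - c) * w) ^ r
      = (1 - w) ^ r * T.eval w + w ^ (r + 3) * Q.eval w := by
    intro w
    have := congrArg (Polynomial.eval w) hQ
    simp only [Polynomial.eval_sub, Polynomial.eval_mul, Polynomial.eval_pow,
      Polynomial.eval_add, Polynomial.eval_C, Polynomial.eval_X, Polynomial.eval_one,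
      Polynomial.eval_sub, hN] at this
    linear_combination this
  -- basic nonvanishing on the sphere
  have hsph : ∀ w ∈ sphere (0:ℂ) ρ, w ≠ 0 ∧ (1 : ℂ) - w ≠ 0 := by
    intro w hw
    rw [mem_sphere_iff_norm, sub_zero] at hw
    refine ⟨?_, ?_⟩
    · rintro rfl
      rw [norm_zero] at hw
      exact hρ0.ne' hw.symm
    · intro h
      rw [sub_eq_zero] at h
      rw [← h, norm_one] at hw
      linarith
  have hcb : ∀ w ∈ closedBall (0:ℂ) ρ, (1 : ℂ) - w ≠ 0 := by
    intro w hw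
    rw [mem_closedBall_iff_norm, sub_zero] at hw
    intro h
    rw [sub_eq_zero] at h
    rw [← h, norm_one] at hw
    linarith
  -- integrand equals g1 + g2 on the circle
  have heq : Set.EqOn (fun w => (c + (1 - c) * w)^(r:ℕ) / (w^(r + 3) * (1 - w)^r))
      (fun w => T.eval w / w^(r+3) + Q.eval w / (1-w)^r) (sphere (0:ℂ) ρ) := by
    intro w hw
    obtain ⟨hw0, hw1⟩ := hsph w hw
    simp only
    rw [hpt w, add_div]
    congr 1
    · rw [mul_comm (w^(r+3)) ((1-w)^r), mul_div_mul_left _ _ (pow_ne_zero _ hw1)]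
    · rw [mul_div_mul_left _ _ (pow_ne_zero _ hw0)]
  have hi1 : CircleIntegrable (fun w => T.eval w / w^(r+3)) 0 ρ := by
    refine (ContinuousOn.div (Polynomial.continuous T).continuousOn
      (by fun_prop) fun w hw => pow_ne_zero _ (hsph w hw).1).circleIntegrable hρ0.le
  have hi2 : CircleIntegrable (fun w => Q.eval w / (1-w)^r) 0 ρ := by
    refine (ContinuousOn.div (Polynomial.continuous Q).continuousOn
      (by fun_prop) fun w hw => pow_ne_zero _ (hsph w hw).2).circleIntegrable hρ0.le
  -- the second piece integrates to zero
  have h2 : (∮ w in C(0, ρ), Q.eval w / (1-w)^r) = 0 := by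
    refine Complex.circleIntegral_eq_zero_of_differentiable_on_off_countable hρ0.le
      Set.countable_empty ?_ ?_
    · refine ContinuousOn.div (Polynomial.continuous Q).continuousOn (by fun_prop)
        fun w hw => pow_ne_zero _ (hcb w hw)
    · intro z hz
      refine DifferentiableAt.div (Polynomial.differentiable Q z) (by fun_prop)
        (pow_ne_zero _ (hcb z (ball_subset_closedBall hz.1)))
  -- the first piece: expand into powers
  have hdeg : T.natDegree < r + 3 := by
    by_cases hT0 : T = 0
    · simp [hT0]
    · rw [Polynomial.natDegree_lt_iff_degree_lt hT0]
      exact_mod_cast PowerSeries.degree_trunc_lt S (r+3)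
  have heq2 : Set.EqOn (fun w : ℂ => T.eval w / w^(r+3))
      (fun w => ∑ n ∈ range (r+3), T.coeff n * w ^ ((n : ℤ) - (r+3))) (sphere (0:ℂ) ρ) := by
    intro w hw
    obtain ⟨hw0, -⟩ := hsph w hw
    simp only
    rw [Polynomial.eval_eq_sum_range' hdeg, Finset.sum_div]
    refine Finset.sum_congr rfl fun n _ => ?_
    rw [mul_div_assoc]
    congr 1
    have hcast : ((n:ℤ) - (r+3)) = (n:ℤ) - ((r+3 : ℕ):ℤ) := by push_cast; ring
    rw [hcast, zpow_sub₀ hw0, zpow_natCast, zpow_natCast]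
  have hint : ∀ n ∈ range (r+3),
      CircleIntegrable (fun w : ℂ => T.coeff n * w ^ ((n:ℤ) - (r+3))) 0 ρ := by
    intro n _
    have h0 : CircleIntegrable (fun z : ℂ => (z - 0) ^ ((n:ℤ) - (r+3))) 0 ρ := by
      rw [circleIntegrable_sub_zpow_iff]
      right; right
      rw [mem_sphere_iff_norm]
      simp [abs_of_pos hρ0, hρ0.ne]
    simp only [sub_zero] at h0
    exact IntervalIntegrable.const_mul h0 _
  have h1 : (∮ w in C(0, ρ), T.eval w / w^(r+3))
      = T.coeff (r+2) * (2 * Real.pi * Complex.I) := by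
    rw [circleIntegral.integral_congr hρ0.le heq2, circleIntegral_finset_sum _ _ _ _ hint]
    rw [Finset.sum_eq_single_of_mem (r+2) (by simp)]
    · rw [circleIntegral.integral_const_mul]
      congr 1
      have hexp : (((r+2:ℕ)):ℤ) - (r+3) = -1 := by push_cast; ring
      rw [hexp]
      have hmem : (0:ℂ) ∈ ball (0:ℂ) ρ := by simp [hρ0]
      have := circleIntegral.integral_sub_inv_of_mem_ball hmem
      simp only [sub_zero] at this
      simpa [zpow_neg, zpow_one] using this
    · intro n _ hn
      rw [circleIntegral.integral_const_mul]
      have hne : (n:ℤ) - (r+3) ≠ -1 := by omega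
      have := circleIntegral.integral_sub_zpow_of_ne hne 0 0 ρ
      simp only [sub_zero] at this
      rw [this, mul_zero]
  -- coefficient of inv
  have hinvc : ∀ m : ℕ, PowerSeries.coeff m inv = ((r - 1 + m).choose (r-1) : ℂ) := by
    intro m
    rw [hinv, PowerSeries.invOneSubPow_val_eq_mk_sub_one_add_choose_of_pos ℂ r hr]
    simp [PowerSeries.coeff_mk]
  -- the coefficient computation
  have hcoeff : T.coeff (r+2) = ∑ j ∈ Finset.range (r + 1),
      (r.choose j : ℂ) * (1 - c)^j * c^(r - j) * ((2 * r + 1 - j).choose (r - 1) : ℂ) := by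
    rw [hT, PowerSeries.coeff_trunc, if_pos (by omega), hS, PowerSeries.coeff_mul,
      Finset.Nat.sum_antidiagonal_eq_sum_range_succ_mk]
    simp only [Nat.succ_eq_add_one]
    rw [show r + 2 + 1 = r + 3 from rfl]
    rw [← Finset.sum_subset (Finset.range_subset_range.mpr (by omega : r + 1 ≤ r + 3))]
    · refine Finset.sum_congr rfl fun k hk => ?_
      rw [Polynomial.coeff_coe, hN, coeffN, hinvc]
      rw [Finset.mem_range] at hk
      rw [show r - 1 + (r + 2 - k) = 2 * r + 1 - k by omega]
    · intro k hk1 hk2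
      rw [Polynomial.coeff_coe, hN, coeffN]
      rw [Finset.mem_range, not_lt] at hk2
      rw [Nat.choose_eq_zero_of_lt (by omega)]
      simp
  -- put everything together
  rw [circleIntegral.integral_congr hρ0.le heq, circleIntegral_add' hi1 hi2, h2, add_zero, h1,
    hcoeff]
  have h2pi : (2 * (Real.pi:ℂ) * Complex.I) ≠ 0 := by
    simp [Real.pi_ne_zero, Complex.I_ne_zero]
  rw [mul_comm, mul_assoc, mul_inv_cancel₀ h2pi, mul_one]



end
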